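/- Let f be a C² functional on a Hilbert space X, η its normalized steepest descent flow, x̄ a strict local minimizer, and γ : [0,1] → f^c a path with ω_{γ(s)} = {x̄} for every s ∈ [0,1]. Define the descending loop γ_η := [(-α_{γ(0)}) ∘ γ] ∘ α_{γ(1)}, where α_x is the descending path associated to x and (-α)(s) = α(1-s). Then γ_η is contractible in f^c: there exists a continuous h : [0,1] × [0,1] → f^c with h(0,·) = γ_η, h(1,·) ≡ x̄, and h(λ,0) = h(λ,1) for all λ. -/

import Mathlib

open Filter Topology Metric Set
open scoped NNReal

variable {X : Type*} [NormedAddCommGroup X] [InnerProductSpace ℝ X] [CompleteSpace X]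

/-- The normalized steepest descent flow of `f`:
`η(0,x) = x` and `dη/dt = -∇f(η)/(1+‖∇f(η)‖)`. -/
def IsNSDFlow (f : X → ℝ) (η : ℝ → X → X) : Prop :=
  (∀ x, η 0 x = x) ∧
  ∀ x t, HasDerivAt (fun s => η s x)
    (-((1 + ‖gradient f (η t x)‖)⁻¹ • gradient f (η t x))) t

/-- The ω-limit set of `x` for the flow `η`. -/
def omegaLim (η : ℝ → X → X) (x : X) : Set X :=
  {y | ∃ t : ℕ → ℝ, Tendsto t atTop atTop ∧ Tendsto (fun n => η (t n) x) atTop (𝓝 y)}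

/-- `x₀` is a strict local minimizer of `f`. -/
def StrictLocalMin (f : X → ℝ) (x₀ : X) : Prop :=
  ∃ r₀ > 0, ∀ r : ℝ, 0 < r → r < r₀ → ∃ ε > 0, ∀ y ∈ Metric.sphere x₀ r, f x₀ + ε ≤ f y

/-- The loop `γ : [0,1] → X` is contractible within the set `S`. -/
def LoopContractibleIn (S : Set X) (γ : ℝ → X) : Prop :=
  ∃ (h : ℝ → ℝ → X) (x₀ : X),
    ContinuousOn (fun p : ℝ × ℝ => h p.1 p.2) (Icc 0 1 ×ˢ Icc 0 1) ∧
    (∀ l ∈ Icc (0:ℝ) 1, ∀ s ∈ Icc (0:ℝ) 1, h l s ∈ S) ∧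
    (∀ s ∈ Icc (0:ℝ) 1, h 0 s = γ s) ∧
    (∀ s ∈ Icc (0:ℝ) 1, h 1 s = x₀) ∧
    ∀ l ∈ Icc (0:ℝ) 1, h l 0 = h l 1

/-- A subset `S` is simply connected: every loop in `S` is contractible in `S`. -/
def SimplyConnIn (S : Set X) : Prop :=
  ∀ γ : ℝ → X, ContinuousOn γ (Icc 0 1) → (∀ s ∈ Icc (0:ℝ) 1, γ s ∈ S) →
    γ 0 = γ 1 → LoopContractibleIn S γ

noncomputable def nsdV (f : X → ℝ) (z : X) : X := -((1 + ‖gradient f z‖)⁻¹ • gradient f z)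

lemma nsd_hasDeriv {f : X → ℝ} {η : ℝ → X → X} (hη : IsNSDFlow f η) (x : X) (t : ℝ) :
    HasDerivAt (fun s => η s x) (nsdV f (η t x)) t := hη.2 x t

lemma nsd_norm_v_le (f : X → ℝ) (z : X) : ‖nsdV f z‖ ≤ 1 := by
  have hg : (0:ℝ) ≤ ‖gradient f z‖ := norm_nonneg _
  have h1 : (0:ℝ) < 1 + ‖gradient f z‖ := by linarith
  have h2 : (0:ℝ) < (1 + ‖gradient f z‖)⁻¹ := inv_pos.2 h1
  rw [nsdV, norm_neg, norm_smul, Real.norm_eq_abs, abs_of_nonneg h2.le]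
  rw [inv_mul_le_iff₀ h1]
  linarith

lemma nsd_grad_contDiff {f : X → ℝ} (hf : ContDiff ℝ 2 f) : ContDiff ℝ 1 (gradient f) := by
  have h1 : ContDiff ℝ 1 (fderiv ℝ f) := hf.fderiv_right (by norm_num)
  exact (InnerProductSpace.toDual ℝ X).symm.contDiff.comp h1

lemma nsd_v_sub_le (f : X → ℝ) (a b : X) :
    ‖nsdV f a - nsdV f b‖ ≤ 2 * ‖gradient f a - gradient f b‖ := by
  set A := gradient f a with hA
  set B := gradient f b with hB
  have hna : (0:ℝ) ≤ ‖A‖ := norm_nonneg _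
  have hnb : (0:ℝ) ≤ ‖B‖ := norm_nonneg _
  have h1a : (0:ℝ) < 1 + ‖A‖ := by linarith
  have h1b : (0:ℝ) < 1 + ‖B‖ := by linarith
  have hd : nsdV f a - nsdV f b
      = -((1 + ‖A‖)⁻¹ • (A - B) + ((1 + ‖A‖)⁻¹ - (1 + ‖B‖)⁻¹) • B) := by
    simp only [nsdV, ← hA, ← hB, smul_sub, sub_smul]
    abel
  rw [hd, norm_neg]
  have t1 : ‖(1 + ‖A‖)⁻¹ • (A - B)‖ ≤ ‖A - B‖ := by
    rw [norm_smul, Real.norm_eq_abs, abs_of_nonneg (inv_pos.2 h1a).le]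
    have : (1 + ‖A‖)⁻¹ ≤ 1 := by
      rw [inv_le_one_iff₀]; right; linarith
    nlinarith [norm_nonneg (A - B)]
  have heq : (1 + ‖A‖)⁻¹ - (1 + ‖B‖)⁻¹ = (‖B‖ - ‖A‖) * ((1 + ‖A‖)⁻¹ * (1 + ‖B‖)⁻¹) := by
    field_simp
    ring
  have t2 : ‖((1 + ‖A‖)⁻¹ - (1 + ‖B‖)⁻¹) • B‖ ≤ ‖A - B‖ := by
    rw [norm_smul, Real.norm_eq_abs, heq, abs_mul]
    have h3 : |‖B‖ - ‖A‖| ≤ ‖A - B‖ := by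
      rw [abs_sub_comm]; exact abs_norm_sub_norm_le A B
    have h4 : |(1 + ‖A‖)⁻¹ * (1 + ‖B‖)⁻¹| = (1 + ‖A‖)⁻¹ * (1 + ‖B‖)⁻¹ := by
      rw [abs_of_nonneg]; positivity
    rw [h4]
    have h5 : (1 + ‖A‖)⁻¹ ≤ 1 := by rw [inv_le_one_iff₀]; right; linarith
    have h6 : (1 + ‖B‖)⁻¹ * ‖B‖ ≤ 1 := by
      rw [inv_mul_le_iff₀ h1b]; linarith
    calc |‖B‖ - ‖A‖| * ((1 + ‖A‖)⁻¹ * (1 + ‖B‖)⁻¹) * ‖B‖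
        ≤ ‖A - B‖ * ((1 + ‖A‖)⁻¹ * (1 + ‖B‖)⁻¹) * ‖B‖ := by
          apply mul_le_mul_of_nonneg_right (mul_le_mul_of_nonneg_right h3 (by positivity)) hnb
      _ = ‖A - B‖ * ((1 + ‖A‖)⁻¹ * ((1 + ‖B‖)⁻¹ * ‖B‖)) := by ring
      _ ≤ ‖A - B‖ * 1 := by
          apply mul_le_mul_of_nonneg_left _ (norm_nonneg _)
          nlinarith [inv_pos.2 h1a, inv_pos.2 h1b]
      _ = ‖A - B‖ := mul_one _
  calc ‖(1 + ‖A‖)⁻¹ • (A - B) + ((1 + ‖A‖)⁻¹ - (1 + ‖B‖)⁻¹) • B‖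
      ≤ ‖(1 + ‖A‖)⁻¹ • (A - B)‖ + ‖((1 + ‖A‖)⁻¹ - (1 + ‖B‖)⁻¹) • B‖ := norm_add_le _ _
    _ ≤ ‖A - B‖ + ‖A - B‖ := add_le_add t1 t2
    _ = 2 * ‖A - B‖ := by ring

lemma nsd_lip_t {f : X → ℝ} {η : ℝ → X → X} (hη : IsNSDFlow f η) (x : X) :
    LipschitzWith 1 (fun t => η t x) := by
  apply lipschitzWith_of_nnnorm_deriv_le (fun t => (nsd_hasDeriv hη x t).differentiableAt)
  intro t
  rw [(nsd_hasDeriv hη x t).deriv]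
  exact_mod_cast nsd_norm_v_le f (η t x)

lemma nsd_f_anti {f : X → ℝ} {η : ℝ → X → X} (hf : ContDiff ℝ 2 f) (hη : IsNSDFlow f η) (x : X) :
    Antitone (fun t => f (η t x)) := by
  have hdf : ∀ t : ℝ, HasDerivAt (fun s => f (η s x))
      (-((1 + ‖gradient f (η t x)‖)⁻¹ * ‖gradient f (η t x)‖ ^ 2)) t := by
    intro t
    have hgd : HasGradientAt f (gradient f (η t x)) (η t x) :=
      ((hf.differentiable (by norm_num)) (η t x)).hasGradientAt
    have h2 := hgd.hasFDerivAt.comp_hasDerivAt t (nsd_hasDeriv hη x t)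
    have h3 : (InnerProductSpace.toDual ℝ X) (gradient f (η t x)) (nsdV f (η t x))
        = -((1 + ‖gradient f (η t x)‖)⁻¹ * ‖gradient f (η t x)‖ ^ 2) := by
      rw [InnerProductSpace.toDual_apply_apply, nsdV, inner_neg_right, real_inner_smul_right,
        real_inner_self_eq_norm_sq]
    rw [h3] at h2
    exact h2
  apply antitone_of_hasDerivAt_nonpos hdf
  intro t
  simp only [Pi.zero_apply, neg_nonpos]
  positivity

lemma nsd_v_locLip {f : X → ℝ} (hf : ContDiff ℝ 2 f) (p : X) :
    ∃ δ > 0, ∃ K : ℝ≥0, LipschitzOnWith K (nsdV f) (ball p δ) := by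
  obtain ⟨K, t, ht, hK⟩ := ((nsd_grad_contDiff hf).contDiffAt (x := p)).exists_lipschitzOnWith
  obtain ⟨δ, hδ, hb⟩ := Metric.mem_nhds_iff.1 ht
  refine ⟨δ, hδ, 2 * K, ?_⟩
  rw [lipschitzOnWith_iff_dist_le_mul]
  intro a ha b hb'
  have h1 : dist (gradient f a) (gradient f b) ≤ K * dist a b :=
    (lipschitzOnWith_iff_dist_le_mul.1 hK) a (hb ha) b (hb hb')
  have h2 : dist (nsdV f a) (nsdV f b) ≤ 2 * dist (gradient f a) (gradient f b) := by
    rw [dist_eq_norm, dist_eq_norm]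
    exact nsd_v_sub_le f a b
  calc dist (nsdV f a) (nsdV f b) ≤ 2 * (K * dist a b) := by linarith
    _ = ((2 * K : ℝ≥0) : ℝ) * dist a b := by push_cast; ring

lemma nsd_orbit_mem {f : X → ℝ} {η : ℝ → X → X} (hη : IsNSDFlow f η) {U : Set X} {y x : X}
    {t0 t1 : ℝ} (ht : t0 ≤ t1) (h0 : η t0 x ∈ connectedComponentIn U y)
    (hsub : ∀ u ∈ Icc t0 t1, η u x ∈ U) :
    η t1 x ∈ connectedComponentIn U y := by
  have hconn : IsPreconnected ((fun u => η u x) '' Icc t0 t1) :=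
    isPreconnected_Icc.image _ (nsd_lip_t hη x).continuous.continuousOn
  have hxi : η t0 x ∈ (fun u => η u x) '' Icc t0 t1 := ⟨t0, ⟨le_rfl, ht⟩, rfl⟩
  have hUim : (fun u => η u x) '' Icc t0 t1 ⊆ U := by
    rintro _ ⟨u, hu, rfl⟩; exact hsub u hu
  rw [connectedComponentIn_eq h0]
  exact hconn.subset_connectedComponentIn hxi hUim ⟨t1, ⟨ht, le_rfl⟩, rfl⟩

lemma nsd_key {f : X → ℝ} {η : ℝ → X → X} (hf : ContDiff ℝ 2 f) (hη : IsNSDFlow f η)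
    (x₀ : X) (A : ℝ) (hA : 0 ≤ A) {ε : ℝ} (hε : 0 < ε) :
    ∃ ρ > 0, ∀ y, dist y x₀ < ρ → ∀ t ∈ Icc 0 A, dist (η t y) (η t x₀) < ε := by
  classical
  set Kset : Set X := (fun t => η t x₀) '' Icc 0 A with hKset
  have hKc : IsCompact Kset := isCompact_Icc.image (nsd_lip_t hη x₀).continuous
  choose δp hδp Kp hKp using fun p : X => nsd_v_locLip hf p
  obtain ⟨P, hPmem, hPsub⟩ := hKc.elim_nhds_subcover (fun p => ball p (δp p / 3))
    (fun p _ => ball_mem_nhds _ (by have := hδp p; positivity))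
  have hPne : P.Nonempty := by
    by_contra hemp
    rw [Finset.not_nonempty_iff_eq_empty] at hemp
    have h0K : η 0 x₀ ∈ Kset := ⟨0, ⟨le_rfl, hA⟩, rfl⟩
    have := hPsub h0K
    simp [hemp] at this
  set δmin : ℝ := P.inf' hPne (fun p => δp p) with hδmin
  have hδminpos : 0 < δmin := by
    rw [hδmin, Finset.lt_inf'_iff]
    exact fun p _ => hδp p
  have hδminle : ∀ p ∈ P, δmin ≤ δp p := fun p hp => Finset.inf'_le _ hp
  set Kr : ℝ := max (((P.sup (fun p => Kp p) : ℝ≥0)) : ℝ) (6 / δmin) with hKr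
  have hKrpos : (0:ℝ) < Kr := lt_max_of_lt_right (by positivity)
  set K' : ℝ≥0 := Real.toNNReal Kr with hK'
  have hK'co : ((K' : ℝ≥0) : ℝ) = Kr := Real.coe_toNNReal _ hKrpos.le
  set N : Set X := ⋃ p ∈ P, ball p (2 * δp p / 3) with hN
  have hNopen : IsOpen N := isOpen_biUnion fun p _ => isOpen_ball
  -- margin: any point within δmin/3 of Kset is in N
  have hmargin : ∀ z q, q ∈ Kset → dist z q < δmin / 3 → z ∈ N := by
    intro z q hq hzq
    obtain ⟨p, hp, hqp⟩ := Set.mem_iUnion₂.1 (hPsub hq)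
    refine Set.mem_iUnion₂.2 ⟨p, hp, ?_⟩
    have h1 : dist q p < δp p / 3 := mem_ball.1 hqp
    have h2 : δmin ≤ δp p := hδminle p hp
    have : dist z p ≤ dist z q + dist q p := dist_triangle _ _ _
    rw [mem_ball]
    linarith
  -- Lipschitz on N
  have hLipN : LipschitzOnWith K' (nsdV f) N := by
    rw [lipschitzOnWith_iff_dist_le_mul]
    intro a ha b hb
    rw [hK'co]
    rcases le_or_gt (dist a b) (δmin / 3) with hcase | hcase
    · obtain ⟨p, hp, hap⟩ := Set.mem_iUnion₂.1 ha
      have h1 : dist a p < 2 * δp p / 3 := mem_ball.1 hap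
      have h2 : δmin ≤ δp p := hδminle p hp
      have hain : a ∈ ball p (δp p) := by rw [mem_ball]; linarith
      have hbin : b ∈ ball p (δp p) := by
        rw [mem_ball]
        have := dist_triangle b a p
        rw [dist_comm b a] at this
        linarith
      have := (lipschitzOnWith_iff_dist_le_mul.1 (hKp p)) a hain b hbin
      have hKle : ((Kp p : ℝ≥0) : ℝ) ≤ Kr := by
        refine le_max_of_le_left ?_
        exact_mod_cast NNReal.coe_le_coe.2 (Finset.le_sup hp)
      have hd0 : (0:ℝ) ≤ dist a b := dist_nonneg
      nlinarith [NNReal.coe_nonneg (Kp p)]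
    · have h1 : dist (nsdV f a) (nsdV f b) ≤ 2 := by
        rw [dist_eq_norm]
        calc ‖nsdV f a - nsdV f b‖ ≤ ‖nsdV f a‖ + ‖nsdV f b‖ := norm_sub_le _ _
          _ ≤ 1 + 1 := add_le_add (nsd_norm_v_le f a) (nsd_norm_v_le f b)
          _ = 2 := by norm_num
      have h2 : (6 / δmin) * (δmin / 3) = 2 := by field_simp; ring
      have h3 : (6 / δmin) ≤ Kr := le_max_right _ _
      have h4 : (0:ℝ) < 6 / δmin := by positivity
      nlinarith [dist_nonneg (x := a) (y := b)]
  -- choose ρ and prove by Gronwall bootstrap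
  set m : ℝ := min (δmin / 6) (ε / 2) with hm
  have hmpos : 0 < m := lt_min (by positivity) (by positivity)
  refine ⟨m * Real.exp (-(Kr * A)), by positivity, ?_⟩
  set ρ : ℝ := m * Real.exp (-(Kr * A)) with hρ
  intro y hy
  set g : ℝ → ℝ := fun t => dist (η t y) (η t x₀) with hg
  have hgc : Continuous g := ((nsd_lip_t hη y).continuous.dist (nsd_lip_t hη x₀).continuous)
  set C : Set ℝ := {t : ℝ | g t ≤ ρ * Real.exp (Kr * t)} with hC
  have hCclosed : IsClosed C :=
    isClosed_le hgc (by continuity)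
  set B : Set ℝ := Icc 0 A ∩ {t : ℝ | Icc 0 t ⊆ C} with hB
  have h0B : (0:ℝ) ∈ B := by
    constructor
    · exact ⟨le_rfl, hA⟩
    · intro u hu
      have hu0 : u = 0 := le_antisymm hu.2 hu.1
      rw [Set.mem_setOf_eq, hu0]
      have : ρ * Real.exp (Kr * 0) = ρ := by simp
      rw [this, hg]
      simp only [hη.1]
      exact le_of_lt hy
  have hBne : B.Nonempty := ⟨0, h0B⟩
  have hBbdd : BddAbove B := ⟨A, fun t ht => ht.1.2⟩
  have hBsubC : B ⊆ C := fun t ht => ht.2 ⟨ht.1.1, le_rfl⟩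
  set c : ℝ := sSup B with hc
  have hc0 : 0 ≤ c := le_csSup hBbdd h0B
  have hcA : c ≤ A := csSup_le hBne fun t ht => ht.1.2
  have hIccC : Icc 0 c ⊆ C := by
    intro u hu
    rcases lt_or_eq_of_le hu.2 with hlt | heq
    · obtain ⟨t, htB, hut⟩ := exists_lt_of_lt_csSup hBne hlt
      exact htB.2 ⟨hu.1, hut.le⟩
    · rw [heq]
      exact hCclosed.closure_subset ((closure_mono hBsubC) (csSup_mem_closure hBne hBbdd))
  -- bound along [0,c]: values ≤ m
  have hbound : ∀ u, u ∈ Icc 0 c → g u ≤ m := by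
    intro u hu
    have h1 : g u ≤ ρ * Real.exp (Kr * u) := hIccC hu
    have h2 : Real.exp (Kr * u) ≤ Real.exp (Kr * A) :=
      Real.exp_le_exp.2 (mul_le_mul_of_nonneg_left (hu.2.trans hcA) hKrpos.le)
    have h3 : ρ * Real.exp (Kr * u) ≤ ρ * Real.exp (Kr * A) :=
      mul_le_mul_of_nonneg_left h2 (by positivity)
    have h4 : ρ * Real.exp (Kr * A) = m := by
      rw [hρ, mul_assoc, ← Real.exp_add]
      simp
    linarith
  have hyN : ∀ u, u ∈ Icc 0 c → η u y ∈ N := by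
    intro u hu
    refine hmargin _ (η u x₀) ⟨u, ⟨hu.1, hu.2.trans hcA⟩, rfl⟩ ?_
    have := hbound u hu
    have hm2 : m ≤ δmin / 6 := min_le_left _ _
    have : dist (η u y) (η u x₀) ≤ δmin / 6 := le_trans this hm2
    rw [dist_comm] at this ⊢
    linarith
  have hx₀N : ∀ u, u ∈ Icc 0 A → η u x₀ ∈ N := by
    intro u hu
    exact hmargin _ (η u x₀) ⟨u, hu, rfl⟩ (by rw [dist_self]; positivity)
  -- Gronwall step: for any c' in (c, A] with trajectory of y in N on [0,c'], get c' ∈ B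
  have hgron : ∀ c', 0 ≤ c' → c' ≤ A → (∀ u ∈ Ico 0 c', η u y ∈ N) → Icc 0 c' ⊆ C := by
    intro c' hc'0 hc'A hyN' u hu
    have := dist_le_of_trajectories_ODE_of_mem (v := fun _ z => nsdV f z)
      (s := fun _ => N) (K := K')
      (fun _ _ => hLipN)
      ((nsd_lip_t hη y).continuous.continuousOn)
      (fun t _ => (nsd_hasDeriv hη y t).hasDerivWithinAt)
      (fun t ht => hyN' t ht)
      ((nsd_lip_t hη x₀).continuous.continuousOn)
      (fun t _ => (nsd_hasDeriv hη x₀ t).hasDerivWithinAt)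
      (fun t ht => hx₀N t ⟨ht.1, ht.2.le.trans hc'A⟩)
      (by simp only [hη.1]; exact le_of_lt hy) u hu
    rw [Set.mem_setOf_eq]
    calc g u ≤ ρ * Real.exp ((K' : ℝ) * (u - 0)) := this
      _ = ρ * Real.exp (Kr * u) := by rw [hK'co, sub_zero]
  -- show c = A
  have hcEq : c = A := by
    by_contra hne
    have hclt : c < A := lt_of_le_of_ne hcA hne
    have hcN : η c y ∈ N := hyN c ⟨hc0, le_rfl⟩
    have hV : IsOpen ((fun u => η u y) ⁻¹' N) := hNopen.preimage (nsd_lip_t hη y).continuous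
    obtain ⟨β, hβpos, hβ⟩ := Metric.isOpen_iff.1 hV c hcN
    set c' : ℝ := min (c + β / 2) A with hc'
    have hc'c : c < c' := lt_min (by linarith) hclt
    have hc'A : c' ≤ A := min_le_right _ _
    have hc'0 : 0 ≤ c' := hc0.trans hc'c.le
    have hyN' : ∀ u ∈ Ico 0 c', η u y ∈ N := by
      intro u hu
      rcases le_or_gt u c with hcase | hcase
      · exact hyN u ⟨hu.1, hcase⟩
      · apply hβ
        rw [mem_ball, Real.dist_eq, abs_of_pos (by linarith)]
        have : u < c + β / 2 := lt_of_lt_of_le hu.2 (min_le_left _ _)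
        linarith
    have hc'B : c' ∈ B := ⟨⟨hc'0, hc'A⟩, hgron c' hc'0 hc'A hyN'⟩
    have : c' ≤ c := le_csSup hBbdd hc'B
    linarith
  intro t ht
  have h1 : g t ≤ m := hbound t (by rw [hcEq]; exact ht)
  have h2 : m ≤ ε / 2 := min_le_right _ _
  calc dist (η t y) (η t x₀) ≤ ε / 2 := le_trans h1 h2
    _ < ε := by linarith

lemma nsd_flowCont {f : X → ℝ} {η : ℝ → X → X} (hf : ContDiff ℝ 2 f) (hη : IsNSDFlow f η)
    {t₀ : ℝ} (ht₀ : 0 ≤ t₀) (x₀ : X) :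
    ContinuousAt (fun p : ℝ × X => η p.1 p.2) (t₀, x₀) := by
  rw [Metric.continuousAt_iff]
  intro ε hε
  obtain ⟨ρ, hρpos, hρ⟩ := nsd_key hf hη x₀ t₀ ht₀ (half_pos hε)
  refine ⟨min ρ (ε / 2), lt_min hρpos (half_pos hε), ?_⟩
  rintro ⟨t, y⟩ hp
  rw [Prod.dist_eq, max_lt_iff] at hp
  obtain ⟨ht, hy⟩ := hp
  have h1 : dist (η t y) (η t₀ y) ≤ dist t t₀ := by
    have := (nsd_lip_t hη y).dist_le_mul t t₀
    simpa using this
  have h2 : dist (η t₀ y) (η t₀ x₀) < ε / 2 :=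
    hρ y (lt_of_lt_of_le hy (min_le_left _ _)) t₀ ⟨ht₀, le_rfl⟩
  have h3 : dist t t₀ < ε / 2 := lt_of_lt_of_le ht (min_le_right _ _)
  calc dist (η t y) (η t₀ x₀) ≤ dist (η t y) (η t₀ y) + dist (η t₀ y) (η t₀ x₀) :=
        dist_triangle _ _ _
    _ < ε / 2 + ε / 2 := by apply add_lt_add_of_le_of_lt (h1.trans h3.le) h2
    _ = ε := by ring

/-! ### Scalar reparametrization helpers -/

noncomputable def nsdSigma (s : ℝ) : ℝ := min (max (4*s - 1) 0) 1
noncomputable def nsdU0 (s : ℝ) : ℝ := max (1 - 4*s) (max (2*s - 1) 0)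
noncomputable def nsdU (l s : ℝ) : ℝ := max (max (2*l - 1) 0) (nsdU0 s)
noncomputable def nsdTau (T0 T1 M l s : ℝ) : ℝ :=
  (T0 + nsdSigma s * (T1 - T0)) + min (2*l) 1 * (M - (T0 + nsdSigma s * (T1 - T0)))

lemma nsdSigma_cont : Continuous nsdSigma := by unfold nsdSigma; fun_prop
lemma nsdU0_cont : Continuous nsdU0 := by unfold nsdU0; fun_prop
lemma nsdU_cont : Continuous (fun p : ℝ × ℝ => nsdU p.1 p.2) := by unfold nsdU nsdU0; fun_prop
lemma nsdTau_cont (T0 T1 M : ℝ) :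
    Continuous (fun p : ℝ × ℝ => nsdTau T0 T1 M p.1 p.2) := by unfold nsdTau nsdSigma; fun_prop

lemma nsdSigma_mem (s : ℝ) : nsdSigma s ∈ Icc (0:ℝ) 1 :=
  ⟨le_min (le_max_right _ _) zero_le_one, min_le_right _ _⟩

lemma nsdU0_nonneg (s : ℝ) : 0 ≤ nsdU0 s := le_trans (le_max_right _ _) (le_max_right _ _)

lemma nsdU_nonneg (l s : ℝ) : 0 ≤ nsdU l s := le_trans (nsdU0_nonneg s) (le_max_right _ _)

lemma nsdU0_le_one {s : ℝ} (hs : s ∈ Icc (0:ℝ) 1) : nsdU0 s ≤ 1 := by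
  obtain ⟨h0, h1⟩ := hs
  apply max_le (by linarith) (max_le (by linarith) zero_le_one)

lemma nsdU_le_one {l s : ℝ} (hl : l ∈ Icc (0:ℝ) 1) (hs : s ∈ Icc (0:ℝ) 1) : nsdU l s ≤ 1 := by
  obtain ⟨hl0, hl1⟩ := hl
  exact max_le (max_le (by linarith) zero_le_one) (nsdU0_le_one hs)

lemma nsdTau_nonneg {T0 T1 M l s : ℝ} (h0 : 0 ≤ T0) (h1 : 0 ≤ T1) (hM0 : T0 ≤ M) (hM1 : T1 ≤ M)
    (hl : l ∈ Icc (0:ℝ) 1) : 0 ≤ nsdTau T0 T1 M l s := by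
  obtain ⟨hσ0, hσ1⟩ := nsdSigma_mem s
  have hm0 : 0 ≤ min (2*l) 1 := le_min (by linarith [hl.1]) zero_le_one
  have hm1 : min (2*l) 1 ≤ 1 := min_le_right _ _
  have hτ0 : 0 ≤ T0 + nsdSigma s * (T1 - T0) := by nlinarith
  have hτM : T0 + nsdSigma s * (T1 - T0) ≤ M := by nlinarith
  unfold nsdTau
  nlinarith

lemma nsdTau_le_M {T0 T1 M l s : ℝ} (h0 : 0 ≤ T0) (h1 : 0 ≤ T1) (hM0 : T0 ≤ M) (hM1 : T1 ≤ M)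
    (hl : l ∈ Icc (0:ℝ) 1) : nsdTau T0 T1 M l s ≤ M := by
  obtain ⟨hσ0, hσ1⟩ := nsdSigma_mem s
  have hm0 : 0 ≤ min (2*l) 1 := le_min (by linarith [hl.1]) zero_le_one
  have hm1 : min (2*l) 1 ≤ 1 := min_le_right _ _
  have hτM : T0 + nsdSigma s * (T1 - T0) ≤ M := by nlinarith
  unfold nsdTau
  nlinarith

lemma nsdTau_ge_base {T0 T1 M l s : ℝ} (hM : T0 + nsdSigma s * (T1 - T0) ≤ M)
    (hl : 0 ≤ l) : T0 + nsdSigma s * (T1 - T0) ≤ nsdTau T0 T1 M l s := by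
  have hm0 : 0 ≤ min (2*l) 1 := le_min (by linarith) zero_le_one
  unfold nsdTau
  nlinarith

-- special values
lemma nsdSigma_left {s : ℝ} (hs : s ≤ 1/4) : nsdSigma s = 0 := by
  unfold nsdSigma
  rw [max_eq_right (by linarith), min_eq_left zero_le_one]

lemma nsdSigma_right {s : ℝ} (hs : 1/2 ≤ s) : nsdSigma s = 1 := by
  unfold nsdSigma
  rw [min_eq_right]
  rw [le_max_iff]; left; linarith

lemma nsdSigma_mid {s : ℝ} (h1 : 1/4 ≤ s) (h2 : s ≤ 1/2) : nsdSigma s = 4*s - 1 := by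
  unfold nsdSigma
  rw [max_eq_left (by linarith), min_eq_left (by linarith)]

lemma nsdU0_left {s : ℝ} (h0 : 0 ≤ s) (hs : s ≤ 1/4) : nsdU0 s = 1 - 4*s := by
  unfold nsdU0
  rw [max_eq_left]
  apply max_le (by linarith) (by linarith)

lemma nsdU0_mid {s : ℝ} (h1 : 1/4 ≤ s) (h2 : s ≤ 1/2) : nsdU0 s = 0 := by
  unfold nsdU0
  rw [show max (2*s - 1) 0 = (0:ℝ) from max_eq_right (by linarith),
    max_eq_right (by linarith)]

lemma nsdU0_right {s : ℝ} (h1 : 1/2 ≤ s) : nsdU0 s = 2*s - 1 := by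
  unfold nsdU0
  rw [show max (2*s - 1) 0 = 2*s - 1 from max_eq_left (by linarith),
    max_eq_right (by linarith)]

lemma nsdU_zero (s : ℝ) : nsdU 0 s = nsdU0 s := by
  unfold nsdU
  rw [show max (2*(0:ℝ) - 1) 0 = (0:ℝ) from max_eq_right (by norm_num),
    max_eq_right (nsdU0_nonneg s)]

lemma nsdU_one {s : ℝ} (hs : s ∈ Icc (0:ℝ) 1) : nsdU 1 s = 1 := by
  unfold nsdU
  rw [show max (2*(1:ℝ) - 1) 0 = (1:ℝ) by rw [max_eq_left (by norm_num)]; norm_num]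
  exact max_eq_left (nsdU0_le_one hs)

lemma nsdU_s0 {l : ℝ} (hl : l ∈ Icc (0:ℝ) 1) : nsdU l 0 = 1 := by
  have h : nsdU0 0 = 1 := by unfold nsdU0; norm_num
  unfold nsdU
  rw [h, max_eq_right]
  apply max_le (by linarith [hl.2]) zero_le_one

lemma nsdU_s1 {l : ℝ} (hl : l ∈ Icc (0:ℝ) 1) : nsdU l 1 = 1 := by
  have h : nsdU0 1 = 1 := by unfold nsdU0; norm_num
  unfold nsdU
  rw [h, max_eq_right]
  apply max_le (by linarith [hl.2]) zero_le_one

lemma nsdTau_zero (T0 T1 M s : ℝ) : nsdTau T0 T1 M 0 s = T0 + nsdSigma s * (T1 - T0) := by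
  unfold nsdTau
  rw [min_eq_left (by norm_num)]
  ring

lemma nsdTau_min_one {T0 T1 M l s : ℝ} (h : min (2*l) 1 = 1) : nsdTau T0 T1 M l s = M := by
  unfold nsdTau; rw [h]; ring

noncomputable def nsdH (η : ℝ → X → X) (γ : ℝ → X) (xbar : X) (T0 T1 M : ℝ) (l s : ℝ) : X :=
  (1 - max (2 * nsdU l s - 1) 0) •
    η (nsdTau T0 T1 M l s * min (2 * nsdU l s) 1) (γ (nsdSigma s))
  + max (2 * nsdU l s - 1) 0 • xbar

theorem stmt17 (f : X → ℝ) (hf : ContDiff ℝ 2 f) (η : ℝ → X → X)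
    (hη : IsNSDFlow f η)
    (c : ℝ) (xbar : X) (hxbarc : f xbar < c) (hmin : StrictLocalMin f xbar)
    (S : Set X) (hS : S = connectedComponentIn {x : X | f x < c} xbar)
    (ε : ℝ) (hε : 0 < ε)
    (F : Set X) (hF : F = connectedComponentIn {x : X | f x < f xbar + ε} xbar)
    (r : ℝ) (hr : 0 < r) (hFr : F ⊆ ball xbar r)
    (hcontr : ∀ x ∈ ball xbar r, ∀ l ∈ Icc (0:ℝ) 1, (1 - l) • x + l • xbar ∈ S)
    (T : X → ℝ) (hT : ∀ x₁ : X, T x₁ = sInf {t : ℝ | 0 ≤ t ∧ η t x₁ ∈ F})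
    (α : X → ℝ → X)
    (hα : ∀ (x₁ : X) (s : ℝ), α x₁ s =
      if s ≤ 1/2 then η (T x₁ * (2 * s)) x₁
      else (1 - (2 * s - 1)) • η (T x₁) x₁ + (2 * s - 1) • xbar)
    (γ : ℝ → X) (hγc : ContinuousOn γ (Icc 0 1))
    (hγS : ∀ s ∈ Icc (0:ℝ) 1, γ s ∈ S)
    (hγω : ∀ s ∈ Icc (0:ℝ) 1, omegaLim η (γ s) = {xbar})
    (L : ℝ → X)
    (hL : ∀ s : ℝ, L s =
      if s ≤ 1/4 then α (γ 0) (1 - 4 * s)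
      else if s ≤ 1/2 then γ (4 * s - 1)
      else α (γ 1) (2 * s - 1)) :
    ∃ h : ℝ → ℝ → X,
      ContinuousOn (fun p : ℝ × ℝ => h p.1 p.2) (Icc 0 1 ×ˢ Icc 0 1) ∧
      (∀ l ∈ Icc (0:ℝ) 1, ∀ s ∈ Icc (0:ℝ) 1, h l s ∈ S) ∧
      (∀ s ∈ Icc (0:ℝ) 1, h 0 s = L s) ∧
      (∀ s ∈ Icc (0:ℝ) 1, h 1 s = xbar) ∧
      ∀ l ∈ Icc (0:ℝ) 1, h l 0 = h l 1 := by
  classical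
  have hfd : Differentiable ℝ f := hf.differentiable (by norm_num)
  have hfc : Continuous f := hfd.continuous
  have hFopen : IsOpen F := by
    rw [hF]; exact (isOpen_lt hfc continuous_const).connectedComponentIn
  have hxbarF : xbar ∈ F := by
    rw [hF]; exact mem_connectedComponentIn (by simp [hε])
  have hanti : ∀ x : X, Antitone fun t => f (η t x) := nsd_f_anti hf hη
  -- the flow preserves S for nonnegative times
  have hflowS : ∀ x ∈ S, ∀ t, 0 ≤ t → η t x ∈ S := by
    intro x hx t ht
    rw [hS]
    have h0 : η 0 x ∈ connectedComponentIn {x : X | f x < c} xbar := by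
      rw [hη.1]; rw [hS] at hx; exact hx
    refine nsd_orbit_mem hη ht h0 ?_
    intro u hu
    have h1 : f (η u x) ≤ f (η 0 x) := hanti x hu.1
    rw [hη.1] at h1
    have h2 : f x < c := by
      rw [hS] at hx
      have h3 : x ∈ {y : X | f y < c} := connectedComponentIn_subset _ _ hx
      exact h3
    exact lt_of_le_of_lt h1 h2
  -- F is forward invariant
  have hinv : ∀ (x : X) (t0 t1 : ℝ), 0 ≤ t0 → t0 ≤ t1 → η t0 x ∈ F → η t1 x ∈ F := by
    intro x t0 t1 _ ht h0
    rw [hF]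
    rw [hF] at h0
    refine nsd_orbit_mem hη ht h0 ?_
    intro u hu
    have h1 : f (η u x) ≤ f (η t0 x) := hanti x hu.1
    have h2 : f (η t0 x) < f xbar + ε := by
      have h3 : η t0 x ∈ {y : X | f y < f xbar + ε} := connectedComponentIn_subset _ _ h0
      exact h3
    exact lt_of_le_of_lt h1 h2
  -- trajectories with ω-limit {xbar} enter F
  have hentry : ∀ x : X, omegaLim η x = {xbar} → ∃ t, 0 ≤ t ∧ η t x ∈ F := by
    intro x hx
    have hxmem : xbar ∈ omegaLim η x := by rw [hx]; exact rfl
    obtain ⟨ts, hts, hconv⟩ := hxmem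
    have h1 : ∀ᶠ n in atTop, η (ts n) x ∈ F := hconv.eventually_mem (hFopen.mem_nhds hxbarF)
    have h2 : ∀ᶠ n in atTop, 0 ≤ ts n := hts.eventually_ge_atTop 0
    obtain ⟨n, hn1, hn2⟩ := (h1.and h2).exists
    exact ⟨ts n, hn2, hn1⟩
  -- facts about the entry time T
  have hTnonneg : ∀ x : X, (∃ t, 0 ≤ t ∧ η t x ∈ F) → 0 ≤ T x := by
    intro x hex
    rw [hT]
    exact le_csInf hex fun b hb => hb.1
  have hTgt : ∀ x : X, (∃ t, 0 ≤ t ∧ η t x ∈ F) → ∀ u, T x < u → η u x ∈ F := by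
    intro x hex u hu
    rw [hT] at hu
    obtain ⟨t, htE, htu⟩ := exists_lt_of_csInf_lt hex hu
    exact hinv x t u htE.1 htu.le htE.2
  have hTdist : ∀ x : X, (∃ t, 0 ≤ t ∧ η t x ∈ F) → ∀ τ, T x ≤ τ →
      dist (η τ x) xbar ≤ r := by
    intro x hex τ hτ
    rcases eq_or_lt_of_le hτ with heq | hlt
    · rw [← heq]
      apply le_of_forall_pos_le_add
      intro κ hκ
      have h1 : η (T x + κ/2) x ∈ F := hTgt x hex _ (by linarith)
      have h3 := (nsd_lip_t hη x).dist_le_mul (T x) (T x + κ/2)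
      rw [NNReal.coe_one, one_mul, Real.dist_eq] at h3
      have h4 : T x - (T x + κ/2) = -(κ/2) := by ring
      rw [h4, abs_neg, abs_of_pos (by linarith)] at h3
      have h5 : dist (η (T x + κ/2) x) xbar < r := mem_ball.1 (hFr h1)
      calc dist (η (T x) x) xbar
          ≤ dist (η (T x) x) (η (T x + κ/2) x) + dist (η (T x + κ/2) x) xbar :=
            dist_triangle _ _ _
        _ ≤ κ/2 + r := add_le_add h3 h5.le
        _ ≤ r + κ := by linarith
    · exact (mem_ball.1 (hFr (hTgt x hex τ hlt))).le
  -- the ball is inside S, and segments from points near xbar stay in S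
  have hballS : ∀ z ∈ ball xbar r, z ∈ S := by
    intro z hz
    have := hcontr z hz 0 ⟨le_rfl, zero_le_one⟩
    simpa using this
  have hseg : ∀ p : X, p ∈ S → dist p xbar ≤ r → ∀ l ∈ Icc (0:ℝ) 1,
      (1 - l) • p + l • xbar ∈ S := by
    intro p hp hpr l hl
    rcases eq_or_lt_of_le hl.1 with h0 | h0
    · rw [← h0]
      simpa using hp
    · apply hballS
      have hd : dist ((1 - l) • p + l • xbar) xbar = (1 - l) * dist p xbar := by
        rw [dist_eq_norm, dist_eq_norm]
        have he : (1 - l) • p + l • xbar - xbar = (1 - l) • (p - xbar) := by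
          module
        rw [he, norm_smul, Real.norm_eq_abs, abs_of_nonneg (by linarith [hl.2])]
      rw [mem_ball, hd]
      have h1 : (1 - l) * dist p xbar ≤ (1 - l) * r :=
        mul_le_mul_of_nonneg_left hpr (by linarith [hl.2])
      nlinarith [hl.2]
  -- entry data for the points of the path
  choose! m hm0 hmF using fun w (hw : w ∈ Icc (0:ℝ) 1) => hentry (γ w) (hγω w hw)
  have entry0 : ∃ t, 0 ≤ t ∧ η t (γ 0) ∈ F :=
    hentry (γ 0) (hγω 0 ⟨le_rfl, zero_le_one⟩)
  have entry1 : ∃ t, 0 ≤ t ∧ η t (γ 1) ∈ F :=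
    hentry (γ 1) (hγω 1 ⟨zero_le_one, le_rfl⟩)
  -- a uniform time M by compactness
  have hVex : ∀ w ∈ Icc (0:ℝ) 1, ∃ V : Set ℝ, IsOpen V ∧ w ∈ V ∧
      ∀ w' ∈ V ∩ Icc (0:ℝ) 1, η (m w) (γ w') ∈ F := by
    intro w hw
    have h1 : ContinuousWithinAt γ (Icc 0 1) w := hγc w hw
    have h2 : ContinuousAt (fun p : ℝ × X => η p.1 p.2) (m w, γ w) :=
      nsd_flowCont hf hη (hm0 w hw) (γ w)
    have hpair : ContinuousWithinAt (fun w' => ((m w : ℝ), γ w')) (Icc 0 1) w :=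
      ContinuousWithinAt.prodMk continuousWithinAt_const h1
    have hc : ContinuousWithinAt (fun w' => η (m w) (γ w')) (Icc 0 1) w :=
      ContinuousAt.comp_continuousWithinAt (f := fun w' => ((m w : ℝ), γ w')) h2 hpair
    have hev : ∀ᶠ w' in 𝓝[Icc (0:ℝ) 1] w, η (m w) (γ w') ∈ F :=
      hc.eventually_mem (hFopen.mem_nhds (hmF w hw))
    rw [eventually_iff, mem_nhdsWithin] at hev
    obtain ⟨V, hVo, hwV, hV⟩ := hev
    exact ⟨V, hVo, hwV, fun w' hw' => hV hw'⟩
  choose! V hVo hVm hVF using hVex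
  obtain ⟨W, hWmem, hWsub⟩ := isCompact_Icc.elim_nhds_subcover V
    (fun w hw => (hVo w hw).mem_nhds (hVm w hw))
  have hWne : W.Nonempty := by
    by_contra hemp
    rw [Finset.not_nonempty_iff_eq_empty] at hemp
    have h0 : (0:ℝ) ∈ Icc (0:ℝ) 1 := ⟨le_rfl, zero_le_one⟩
    have := hWsub h0
    simp [hemp] at this
  set M : ℝ := max (max (T (γ 0)) (T (γ 1))) (max (W.sup' hWne m) 0) with hM
  have hT0M : T (γ 0) ≤ M := le_trans (le_max_left _ _) (le_max_left _ _)
  have hT1M : T (γ 1) ≤ M := le_trans (le_max_right _ _) (le_max_left _ _)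
  have hM0 : 0 ≤ M := le_trans (le_max_right _ 0) (le_max_right _ _)
  have hT0ge : 0 ≤ T (γ 0) := hTnonneg _ entry0
  have hT1ge : 0 ≤ T (γ 1) := hTnonneg _ entry1
  have hMF : ∀ w' ∈ Icc (0:ℝ) 1, η M (γ w') ∈ F := by
    intro w' hw'
    obtain ⟨w, hwW, hw'V⟩ := Set.mem_iUnion₂.1 (hWsub hw')
    have hwIcc : w ∈ Icc (0:ℝ) 1 := hWmem w hwW
    have h1 : η (m w) (γ w') ∈ F := hVF w hwIcc w' ⟨hw'V, hw'⟩
    refine hinv (γ w') (m w) M (hm0 w hwIcc) ?_ h1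
    exact le_trans (le_trans (Finset.le_sup' m hwW) (le_max_left _ 0)) (le_max_right _ _)
  -- the algebraic form of α
  have hQ : ∀ (x : X) (u' : ℝ),
      (1 - max (2 * u' - 1) 0) • η (T x * min (2 * u') 1) x
        + max (2 * u' - 1) 0 • xbar = α x u' := by
    intro x u'
    rw [hα]
    rcases le_or_gt u' (1/2) with hu | hu
    · rw [if_pos hu, max_eq_right (by linarith), min_eq_left (by linarith)]
      simp
    · rw [if_neg (not_le.2 hu), max_eq_left (by linarith), min_eq_right (by linarith), mul_one]
  refine ⟨nsdH η γ xbar (T (γ 0)) (T (γ 1)) M, ?_, ?_, ?_, ?_, ?_⟩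
  · -- continuity
    unfold nsdH
    intro p hp
    rw [Set.mem_prod] at hp
    have hmaxc : Continuous fun q : ℝ × ℝ => max (2 * nsdU q.1 q.2 - 1) 0 :=
      ((continuous_const.mul nsdU_cont).sub continuous_const).max continuous_const
    have httc : Continuous fun q : ℝ × ℝ =>
        nsdTau (T (γ 0)) (T (γ 1)) M q.1 q.2 * min (2 * nsdU q.1 q.2) 1 :=
      (nsdTau_cont _ _ _).mul ((continuous_const.mul nsdU_cont).min continuous_const)
    have hγσ : ContinuousWithinAt (fun q : ℝ × ℝ => γ (nsdSigma q.2))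
        (Icc 0 1 ×ˢ Icc 0 1) p := by
      refine ContinuousWithinAt.comp (hγc _ (nsdSigma_mem _))
        (nsdSigma_cont.comp continuous_snd).continuousWithinAt ?_
      intro q _
      exact nsdSigma_mem _
    have htt0 : 0 ≤ nsdTau (T (γ 0)) (T (γ 1)) M p.1 p.2 * min (2 * nsdU p.1 p.2) 1 := by
      apply mul_nonneg (nsdTau_nonneg hT0ge hT1ge hT0M hT1M hp.1)
      exact le_min (mul_nonneg (by norm_num) (nsdU_nonneg _ _)) zero_le_one
    have hflow : ContinuousWithinAt (fun q : ℝ × ℝ =>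
        η (nsdTau (T (γ 0)) (T (γ 1)) M q.1 q.2 * min (2 * nsdU q.1 q.2) 1)
          (γ (nsdSigma q.2))) (Icc 0 1 ×ˢ Icc 0 1) p := by
      have h1 := nsd_flowCont hf hη htt0 (γ (nsdSigma p.2))
      have hpair : ContinuousWithinAt (fun q : ℝ × ℝ =>
          (nsdTau (T (γ 0)) (T (γ 1)) M q.1 q.2 * min (2 * nsdU q.1 q.2) 1,
            γ (nsdSigma q.2))) (Icc 0 1 ×ˢ Icc 0 1) p :=
        ContinuousWithinAt.prodMk httc.continuousWithinAt hγσ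
      exact ContinuousAt.comp_continuousWithinAt (f := fun q : ℝ × ℝ =>
        (nsdTau (T (γ 0)) (T (γ 1)) M q.1 q.2 * min (2 * nsdU q.1 q.2) 1,
          γ (nsdSigma q.2))) h1 hpair
    exact ((continuous_const.sub hmaxc).continuousWithinAt.smul hflow).add
      (hmaxc.continuousWithinAt.smul continuousWithinAt_const)
  · -- membership in S
    intro l hl s hs
    have hbS : γ (nsdSigma s) ∈ S := hγS _ (nsdSigma_mem s)
    have hτ0 : 0 ≤ nsdTau (T (γ 0)) (T (γ 1)) M l s :=
      nsdTau_nonneg hT0ge hT1ge hT0M hT1M hl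
    rcases le_or_gt (2 * nsdU l s) 1 with hc | hc
    · have hmax : max (2 * nsdU l s - 1) 0 = 0 := max_eq_right (by linarith)
      unfold nsdH
      rw [hmax]
      simp only [sub_zero, one_smul, zero_smul, add_zero]
      apply hflowS _ hbS
      apply mul_nonneg hτ0
      exact le_min (mul_nonneg (by norm_num) (nsdU_nonneg _ _)) zero_le_one
    · have hmin : min (2 * nsdU l s) 1 = 1 := min_eq_right (by linarith)
      have hmax : max (2 * nsdU l s - 1) 0 = 2 * nsdU l s - 1 := max_eq_left (by linarith)
      have hL2a : 0 < 2 * nsdU l s - 1 := by linarith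
      have hL2b : 2 * nsdU l s - 1 ≤ 1 := by
        have := nsdU_le_one hl hs; linarith
      have hdist : dist (η (nsdTau (T (γ 0)) (T (γ 1)) M l s) (γ (nsdSigma s))) xbar ≤ r := by
        have hu12 : (1:ℝ)/2 < nsdU l s := by linarith
        rcases lt_max_iff.1 hu12 with hcl | hcs
        · have hlgt : (1:ℝ) < 2*l := by
            rcases lt_max_iff.1 hcl with h | h
            · linarith
            · norm_num at h
          have hτM : nsdTau (T (γ 0)) (T (γ 1)) M l s = M :=
            nsdTau_min_one (min_eq_right (by linarith))
          rw [hτM]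
          exact le_of_lt (mem_ball.1 (hFr (hMF _ (nsdSigma_mem s))))
        · rcases lt_max_iff.1 hcs with h14 | h34
          · have hσ : nsdSigma s = 0 := nsdSigma_left (by linarith)
            have hτge : T (γ 0) ≤ nsdTau (T (γ 0)) (T (γ 1)) M l s := by
              have hb : T (γ 0) + nsdSigma s * (T (γ 1) - T (γ 0)) = T (γ 0) := by
                rw [hσ]; ring
              have := nsdTau_ge_base (M := M) (l := l) (s := s)
                (T0 := T (γ 0)) (T1 := T (γ 1)) (by rw [hb]; exact hT0M) hl.1
              rw [hb] at this
              exact this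
            rw [hσ]
            exact hTdist (γ 0) entry0 _ hτge
          · have h2s : (1:ℝ)/2 < 2*s - 1 := by
              rcases lt_max_iff.1 h34 with h | h
              · exact h
              · norm_num at h
            have hσ : nsdSigma s = 1 := nsdSigma_right (by linarith)
            have hτge : T (γ 1) ≤ nsdTau (T (γ 0)) (T (γ 1)) M l s := by
              have hb : T (γ 0) + nsdSigma s * (T (γ 1) - T (γ 0)) = T (γ 1) := by
                rw [hσ]; ring
              have := nsdTau_ge_base (M := M) (l := l) (s := s)
                (T0 := T (γ 0)) (T1 := T (γ 1)) (by rw [hb]; exact hT1M) hl.1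
              rw [hb] at this
              exact this
            rw [hσ]
            exact hTdist (γ 1) entry1 _ hτge
      unfold nsdH
      rw [hmin, hmax, mul_one]
      exact hseg _ (hflowS _ hbS _ hτ0) hdist _ ⟨hL2a.le, hL2b⟩
  · -- h 0 s = L s
    intro s hs
    rw [hL]
    rcases le_or_gt s (1/4) with h1 | h1
    · rw [if_pos h1]
      have hσ : nsdSigma s = 0 := nsdSigma_left h1
      have hu : nsdU 0 s = 1 - 4*s := by rw [nsdU_zero, nsdU0_left hs.1 h1]
      have hτ : nsdTau (T (γ 0)) (T (γ 1)) M 0 s = T (γ 0) := by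
        rw [nsdTau_zero, hσ]; ring
      unfold nsdH
      rw [hσ, hu, hτ]
      have := hQ (γ 0) (1 - 4*s)
      convert this using 4 <;> ring
    · rw [if_neg (not_le.2 h1)]
      rcases le_or_gt s (1/2) with h2 | h2
      · rw [if_pos h2]
        have hσ : nsdSigma s = 4*s - 1 := nsdSigma_mid h1.le h2
        have hu : nsdU 0 s = 0 := by rw [nsdU_zero, nsdU0_mid h1.le h2]
        unfold nsdH
        rw [hu, hσ]
        norm_num
        exact hη.1 _
      · rw [if_neg (not_le.2 h2)]
        have hσ : nsdSigma s = 1 := nsdSigma_right h2.le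
        have hu : nsdU 0 s = 2*s - 1 := by rw [nsdU_zero, nsdU0_right h2.le]
        have hτ : nsdTau (T (γ 0)) (T (γ 1)) M 0 s = T (γ 1) := by
          rw [nsdTau_zero, hσ]; ring
        unfold nsdH
        rw [hσ, hu, hτ]
        have := hQ (γ 1) (2*s - 1)
        convert this using 4 <;> ring
  · -- h 1 s = xbar
    intro s hs
    unfold nsdH
    rw [nsdU_one hs]
    norm_num
  · -- h l 0 = h l 1
    intro l hl
    unfold nsdH
    rw [nsdU_s0 hl, nsdU_s1 hl]
    norm_num
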